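/- If k > 0, every solution with nonnegative initial data and x(0) > 0 satisfies limsup_{t→∞} x(t) ≤ M, limsup_{t→∞} z(t) ≤ M, and limsup_{t→∞} y(t) ≤ M, where M = k(k+k₅)(k+k₃)/(k₃k₅). -/

import Mathlib

open Filter Set Real Topology

section Helpers

/-- monotone from nonneg derivative on Ici T -/
lemma mono_aux {f f' : ℝ → ℝ} {T : ℝ}
    (hf : ∀ t ≥ T, HasDerivAt f (f' t) t) (h0 : ∀ t ≥ T, 0 ≤ f' t) :
    MonotoneOn f (Set.Ici T) := by
  apply monotoneOn_of_deriv_nonneg (convex_Ici T)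
  · exact fun t ht => (hf t ht).continuousAt.continuousWithinAt
  · intro t ht
    rw [interior_Ici] at ht
    exact (hf t (le_of_lt ht)).differentiableAt.differentiableWithinAt
  · intro t ht
    rw [interior_Ici] at ht
    rw [(hf t (le_of_lt ht)).deriv]
    exact h0 t (le_of_lt ht)

lemma anti_aux {f f' : ℝ → ℝ} {T : ℝ}
    (hf : ∀ t ≥ T, HasDerivAt f (f' t) t) (h0 : ∀ t ≥ T, f' t ≤ 0) :
    AntitoneOn f (Set.Ici T) := by
  apply antitoneOn_of_deriv_nonpos (convex_Ici T)
  · exact fun t ht => (hf t ht).continuousAt.continuousWithinAt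
  · intro t ht
    rw [interior_Ici] at ht
    exact (hf t (le_of_lt ht)).differentiableAt.differentiableWithinAt
  · intro t ht
    rw [interior_Ici] at ht
    rw [(hf t (le_of_lt ht)).deriv]
    exact h0 t (le_of_lt ht)

/-- core comparison: u' ≤ b (L - u) on [T,∞) gives explicit exponential bound -/
lemma comp_upper_core {b L T : ℝ} (hb : 0 < b) {u u' : ℝ → ℝ}
    (hu : ∀ t ≥ T, HasDerivAt u (u' t) t)
    (hle : ∀ t ≥ T, u' t ≤ b * (L - u t)) :
    ∀ t ≥ T, u t ≤ L + (u T - L) * Real.exp (-(b * (t - T))) := by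
  set g : ℝ → ℝ := fun t => (u t - L) * Real.exp (b * (t - T)) with hg
  have hgderiv : ∀ t ≥ T, HasDerivAt g
      ((u' t + b * (u t - L)) * Real.exp (b * (t - T))) t := by
    intro t ht
    have h1 : HasDerivAt (fun s => b * (s - T)) b t := by
      simpa using (((hasDerivAt_id t).sub_const T).const_mul b)
    have h2 : HasDerivAt (fun s => Real.exp (b * (s - T))) (Real.exp (b * (t - T)) * b) t :=
      (Real.hasDerivAt_exp _).comp t h1
    have h3 : HasDerivAt (fun s => u s - L) (u' t) t := (hu t ht).sub_const L
    have := h3.mul h2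
    exact this.congr_deriv (by ring)
  have hanti : AntitoneOn g (Set.Ici T) := by
    apply anti_aux hgderiv
    intro t ht
    have h1 : u' t + b * (u t - L) ≤ 0 := by have := hle t ht; linarith
    have h2 : 0 < Real.exp (b * (t - T)) := Real.exp_pos _
    exact mul_nonpos_of_nonpos_of_nonneg h1 h2.le
  intro t ht
  have hgt : g t ≤ g T := hanti (le_refl T : T ∈ Set.Ici T) ht ht
  have hgT : g T = u T - L := by simp [hg]
  rw [hgT] at hgt
  have hexp : (0:ℝ) < Real.exp (b * (t - T)) := Real.exp_pos _
  have : u t - L ≤ (u T - L) * Real.exp (-(b * (t - T))) := by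
    rw [Real.exp_neg]
    calc u t - L = (u t - L) * Real.exp (b * (t - T)) * (Real.exp (b * (t - T)))⁻¹ := by
          field_simp
      _ ≤ (u T - L) * (Real.exp (b * (t - T)))⁻¹ := by
          apply mul_le_mul_of_nonneg_right hgt (by positivity)
  linarith

/-- eventual upper comparison: if eventually u' ≤ b (L - u), then eventually u ≤ L + ε -/
lemma comp_upper {b L : ℝ} (hb : 0 < b) {u u' : ℝ → ℝ}
    (hu : ∀ t ≥ (0:ℝ), HasDerivAt u (u' t) t)
    (hle : ∀ᶠ t in atTop, u' t ≤ b * (L - u t)) :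
    ∀ ε > (0:ℝ), ∀ᶠ t in atTop, u t ≤ L + ε := by
  intro ε hε
  obtain ⟨T₀, hT₀⟩ := eventually_atTop.1 hle
  set T := max T₀ 0 with hT
  have hcore := comp_upper_core hb (u' := u')
    (fun t ht => hu t (le_trans (le_max_right T₀ 0) ht))
    (fun t ht => hT₀ t (le_trans (le_max_left T₀ 0) ht)) (T := T)
  have htend : Tendsto (fun t => (u T - L) * Real.exp (-(b * (t - T)))) atTop (𝓝 0) := by
    have h1 : Tendsto (fun t : ℝ => -(b * (t - T))) atTop atBot := by
      apply tendsto_neg_atTop_atBot.comp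
      exact (tendsto_atTop_add_const_right atTop (-T) tendsto_id).const_mul_atTop hb
    have h2 := Real.tendsto_exp_atBot.comp h1
    simpa using h2.const_mul (u T - L)
  have hev : ∀ᶠ t in atTop, (u T - L) * Real.exp (-(b * (t - T))) < ε :=
    htend.eventually_lt_const hε
  filter_upwards [hev, eventually_ge_atTop T] with t h1 h2
  have := hcore t h2
  linarith

/-- eventual lower comparison -/
lemma comp_lower {b L : ℝ} (hb : 0 < b) {u u' : ℝ → ℝ}
    (hu : ∀ t ≥ (0:ℝ), HasDerivAt u (u' t) t)
    (hle : ∀ᶠ t in atTop, b * (L - u t) ≤ u' t) :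
    ∀ ε > (0:ℝ), ∀ᶠ t in atTop, L - ε ≤ u t := by
  intro ε hε
  have hneg : ∀ t ≥ (0:ℝ), HasDerivAt (fun s => -u s) (-u' t) t := fun t ht => (hu t ht).neg
  have hle' : ∀ᶠ t in atTop, -u' t ≤ b * ((-L) - (-u t)) := by
    filter_upwards [hle] with t h; linarith
  filter_upwards [comp_upper hb hneg hle' ε hε] with t h
  linarith

/-- conclude limsup from eventual bounds -/
lemma limsup_le_aux {f : ℝ → ℝ} {M : ℝ}
    (h0 : ∀ᶠ t in atTop, 0 ≤ f t)
    (hev : ∀ ε > (0:ℝ), ∀ᶠ t in atTop, f t ≤ M + ε) :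
    limsup f atTop ≤ M := by
  apply le_of_forall_pos_le_add
  intro ε hε
  exact limsup_le_of_le (isCoboundedUnder_le_of_eventually_le atTop h0) (hev ε hε)

/-- positivity of x -/
lemma xpos_aux {k : ℝ} {x y : ℝ → ℝ}
    (hx : ∀ t ≥ (0:ℝ), HasDerivAt x (k * x t - x t * y t) t)
    (hyc : ∀ t ≥ (0:ℝ), ContinuousAt y t)
    (hk : 0 < k) (hx0 : 0 < x 0) : ∀ t ≥ (0:ℝ), 0 < x t := by
  by_contra hcon
  push_neg at hcon
  obtain ⟨t₁, ht₁, hxt₁⟩ := hcon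
  have hxc : ∀ t ≥ (0:ℝ), ContinuousAt x t := fun t ht => (hx t ht).continuousAt
  -- IVT gives a zero c of x in [0, t₁]
  have hxcon : ContinuousOn x (Icc 0 t₁) := fun t ht => (hxc t ht.1).continuousWithinAt
  have h0mem : (0:ℝ) ∈ Icc (x t₁) (x 0) := ⟨hxt₁, hx0.le⟩
  obtain ⟨c, hc, hxc0⟩ := intermediate_value_Icc' ht₁ hxcon h0mem
  -- bound y on [0, c]
  have hycon : ContinuousOn y (Icc 0 c) := fun t ht => (hyc t ht.1).continuousWithinAt
  obtain ⟨C, hC⟩ := isCompact_Icc.exists_bound_of_continuousOn hycon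
  have hC0 : 0 ≤ C := le_trans (norm_nonneg _) (hC 0 ⟨le_refl 0, hc.1⟩)
  -- backward function
  set f : ℝ → ℝ := fun s => x (c - s) with hf
  set f' : ℝ → ℝ := fun s => -(k * x (c - s) - x (c - s) * y (c - s)) with hf'
  have hfd : ∀ s ∈ Icc (0:ℝ) c, HasDerivAt f (f' s) s := by
    intro s hs
    have hcs : (0:ℝ) ≤ c - s := by linarith [hs.2]
    have h1 : HasDerivAt (fun s : ℝ => c - s) (-1) s := (hasDerivAt_id s).const_sub c
    have := (hx (c - s) hcs).comp s h1
    exact this.congr_deriv (by simp [hf'])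
  have hfcont : ContinuousOn f (Icc 0 c) := by
    intro s hs
    have hcs : (0:ℝ) ≤ c - s := by linarith [hs.2]
    exact ((hxc (c - s) hcs).comp (by fun_prop : ContinuousAt (fun s : ℝ => c - s) s)).continuousWithinAt
  have hbound : ∀ s ∈ Ico (0:ℝ) c, ‖f' s‖ ≤ (k + C) * ‖f s‖ + 0 := by
    intro s hs
    have hcs1 : (0:ℝ) ≤ c - s := by linarith [hs.2]
    have hcs2 : c - s ≤ c := by linarith [hs.1]
    have hyb : ‖y (c - s)‖ ≤ C := hC _ ⟨hcs1, hcs2⟩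
    have : ‖f' s‖ = ‖f s‖ * ‖k - y (c - s)‖ := by
      rw [hf', hf]
      simp only [Real.norm_eq_abs]
      rw [abs_neg, ← abs_mul]
      ring_nf
    rw [this]
    have h2 : ‖k - y (c - s)‖ ≤ k + C := by
      calc ‖k - y (c - s)‖ ≤ ‖k‖ + ‖y (c - s)‖ := norm_sub_le _ _
        _ ≤ k + C := by rw [Real.norm_eq_abs, abs_of_pos hk]; linarith
    nlinarith [norm_nonneg (f s)]
  have hgron := norm_le_gronwallBound_of_norm_deriv_right_le hfcont
    (fun s hs => (hfd s ⟨hs.1, hs.2.le⟩).hasDerivWithinAt)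
    (by simp [hf, hxc0] : ‖f 0‖ ≤ 0) hbound
  have := hgron c ⟨hc.1, le_refl c⟩
  rw [gronwallBound_ε0] at this
  simp [hf] at this
  linarith

/-- nonnegativity: u' = b(g - u), g ≥ 0, u 0 ≥ 0 ⇒ u ≥ 0 -/
lemma nonneg_aux {b : ℝ} (hb : 0 < b) {u g : ℝ → ℝ}
    (hu : ∀ t ≥ (0:ℝ), HasDerivAt u (b * (g t - u t)) t)
    (hg : ∀ t ≥ (0:ℝ), 0 ≤ g t) (hu0 : 0 ≤ u 0) : ∀ t ≥ (0:ℝ), 0 ≤ u t := by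
  set h : ℝ → ℝ := fun t => u t * Real.exp (b * t) with hh
  have hd : ∀ t ≥ (0:ℝ), HasDerivAt h (b * g t * Real.exp (b * t)) t := by
    intro t ht
    have h1 : HasDerivAt (fun s : ℝ => b * s) b t := by
      simpa using (hasDerivAt_id t).const_mul b
    have h2 : HasDerivAt (fun s => Real.exp (b * s)) (Real.exp (b * t) * b) t :=
      (Real.hasDerivAt_exp _).comp t h1
    have := (hu t ht).mul h2
    exact this.congr_deriv (by ring)
  have hmono : MonotoneOn h (Set.Ici 0) := by
    apply mono_aux hd
    intro t ht
    have := hg t ht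
    positivity
  intro t ht
  have := hmono (le_refl (0:ℝ) : (0:ℝ) ∈ Set.Ici (0:ℝ)) ht ht
  simp only [hh, mul_zero, Real.exp_zero, mul_one] at this
  nlinarith [Real.exp_pos (b * t), hu0]

end Helpers


/-- If `k > 0`, every solution with nonnegative initial data and `x(0) > 0` satisfies
`limsup x ≤ M`, `limsup z ≤ M`, `limsup y ≤ M`, where `M = k(k+k₅)(k+k₃)/(k₃k₅)`. -/
theorem stmt_13 (k k₃ k₅ : ℝ) (hk : 0 < k) (hk₃ : 0 < k₃) (hk₅ : 0 < k₅)
    (x y z : ℝ → ℝ)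
    (hx : ∀ t ≥ (0 : ℝ), HasDerivAt x (k * x t - x t * y t) t)
    (hy : ∀ t ≥ (0 : ℝ), HasDerivAt y (k₃ * (z t - y t)) t)
    (hz : ∀ t ≥ (0 : ℝ), HasDerivAt z (k₅ * (x t - z t)) t)
    (hx0 : 0 < x 0) (hy0 : 0 ≤ y 0) (hz0 : 0 ≤ z 0) :
    limsup x atTop ≤ k * (k + k₅) * (k + k₃) / (k₃ * k₅) ∧
    limsup z atTop ≤ k * (k + k₅) * (k + k₃) / (k₃ * k₅) ∧
    limsup y atTop ≤ k * (k + k₅) * (k + k₃) / (k₃ * k₅) := by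
  set M : ℝ := k * (k + k₅) * (k + k₃) / (k₃ * k₅) with hMdef
  have hM0 : 0 < M := by positivity
  have hxpos : ∀ t ≥ (0:ℝ), 0 < x t :=
    xpos_aux hx (fun t ht => (hy t ht).continuousAt) hk hx0
  have hznn : ∀ t ≥ (0:ℝ), 0 ≤ z t :=
    nonneg_aux hk₅ hz (fun t ht => (hxpos t ht).le) hz0
  have hynn : ∀ t ≥ (0:ℝ), 0 ≤ y t := nonneg_aux hk₃ hy hznn hy0
  set A : ℝ := k₅ / (k + k₅) with hAdef
  -- step 1: liminf of w = z/x
  set w' : ℝ → ℝ := fun t => (k₅ * (x t - z t) * x t - z t * (k * x t - x t * y t)) / x t ^ 2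
    with hw'def
  have hwd : ∀ t ≥ (0:ℝ), HasDerivAt (fun s => z s / x s) (w' t) t := fun t ht =>
    (hz t ht).div (hx t ht) (hxpos t ht).ne'
  have hwle : ∀ t ≥ (0:ℝ), (k + k₅) * (A - z t / x t) ≤ w' t := by
    intro t ht
    rw [← sub_nonneg]
    have hxt := hxpos t ht
    have key : w' t - (k + k₅) * (A - z t / x t) = z t * y t / x t := by
      rw [hw'def, hAdef]
      field_simp
      ring
    rw [key]
    have := hznn t ht
    have := hynn t ht
    positivity
  have hstep1 : ∀ ε > (0:ℝ), ∀ᶠ t in atTop, A - ε ≤ z t / x t :=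
    comp_lower (by positivity) hwd ((eventually_ge_atTop 0).mono hwle)
  -- step 2: liminf of v = y/x, depending on δ
  set v' : ℝ → ℝ := fun t => (k₃ * (z t - y t) * x t - y t * (k * x t - x t * y t)) / x t ^ 2
    with hv'def
  have hvd : ∀ t ≥ (0:ℝ), HasDerivAt (fun s => y s / x s) (v' t) t := fun t ht =>
    (hy t ht).div (hx t ht) (hxpos t ht).ne'
  have hstep2 : ∀ δ > (0:ℝ), ∀ᶠ t in atTop, k₃ * (A - δ) / (k + k₃) - δ ≤ y t / x t := by
    intro δ hδ
    have hvle : ∀ᶠ t in atTop,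
        (k + k₃) * (k₃ * (A - δ) / (k + k₃) - y t / x t) ≤ v' t := by
      filter_upwards [hstep1 δ hδ, eventually_ge_atTop (0:ℝ)] with t hw ht
      rw [← sub_nonneg]
      have hxt := hxpos t ht
      have key : v' t - (k + k₃) * (k₃ * (A - δ) / (k + k₃) - y t / x t)
          = k₃ * (z t / x t - (A - δ)) + y t ^ 2 / x t := by
        rw [hv'def]
        field_simp
        ring
      rw [key]
      have h1 : 0 ≤ z t / x t - (A - δ) := by linarith
      have h2 : 0 ≤ y t ^ 2 / x t := by positivity
      linarith [mul_nonneg hk₃.le h1]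
    exact comp_lower (by positivity) hvd hvle δ hδ
  -- step 3: liminf of u = 1/x
  set u' : ℝ → ℝ := fun t => -(k * x t - x t * y t) / x t ^ 2 with hu'def
  have hud : ∀ t ≥ (0:ℝ), HasDerivAt (fun s => (x s)⁻¹) (u' t) t := fun t ht =>
    (hx t ht).inv (hxpos t ht).ne'
  have hstep3 : ∀ δ > (0:ℝ), ∀ᶠ t in atTop,
      (k₃ * (A - δ) / (k + k₃) - δ) / k - δ ≤ (x t)⁻¹ := by
    intro δ hδ
    have hule : ∀ᶠ t in atTop,
        k * ((k₃ * (A - δ) / (k + k₃) - δ) / k - (x t)⁻¹) ≤ u' t := by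
      filter_upwards [hstep2 δ hδ, eventually_ge_atTop (0:ℝ)] with t hv ht
      rw [← sub_nonneg]
      have hxt := hxpos t ht
      have key : u' t - k * ((k₃ * (A - δ) / (k + k₃) - δ) / k - (x t)⁻¹)
          = y t / x t - (k₃ * (A - δ) / (k + k₃) - δ) := by
        rw [hu'def]
        field_simp
        ring
      rw [key]
      linarith
    exact comp_lower hk hud hule δ hδ
  -- step 4: eventual bound on x
  have hxev : ∀ ε > (0:ℝ), ∀ᶠ t in atTop, x t ≤ M + ε := by
    intro ε hε
    set F : ℝ → ℝ := fun δ => (k₃ * (A - δ) / (k + k₃) - δ) / k - δ with hFdef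
    have hF0 : F 0 = 1 / M := by
      rw [hFdef, hMdef, hAdef]
      field_simp
      ring
    have hFc : ContinuousAt F 0 := by
      apply ContinuousAt.sub _ continuousAt_id
      apply ContinuousAt.div_const
      apply ContinuousAt.sub _ continuousAt_id
      apply ContinuousAt.div_const
      exact (continuousAt_const.sub continuousAt_id).const_mul k₃
    have hlt : 1 / (M + ε) < F 0 := by
      rw [hF0]
      apply one_div_lt_one_div_of_lt hM0
      linarith
    have hev : ∀ᶠ δ in nhds (0:ℝ), 1 / (M + ε) < F δ :=
      hFc.eventually_const_lt hlt
    obtain ⟨δ, hδF, hδ0⟩ :=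
      ((hev.filter_mono nhdsWithin_le_nhds).and (eventually_mem_nhdsWithin
        (s := Set.Ioi (0:ℝ)))).exists
    have hδpos : 0 < δ := hδ0
    filter_upwards [hstep3 δ hδpos, eventually_ge_atTop (0:ℝ)] with t hu ht
    have hxt := hxpos t ht
    have hFδpos : 0 < F δ := lt_trans (by positivity) hδF
    have h1 : 1 / (M + ε) ≤ (x t)⁻¹ := le_trans hδF.le (by rw [hFdef]; exact hu)
    rw [one_div] at h1
    have := (inv_anti₀ (by positivity) h1)
    simpa using this.trans_eq (by simp)
  -- step 5: eventual bound on z then y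
  have hzev : ∀ ε > (0:ℝ), ∀ᶠ t in atTop, z t ≤ M + ε := by
    intro ε hε
    have hzle : ∀ᶠ t in atTop, k₅ * (x t - z t) ≤ k₅ * ((M + ε/2) - z t) := by
      filter_upwards [hxev (ε/2) (by linarith)] with t h
      have : x t ≤ M + ε/2 := h
      nlinarith
    have := comp_upper hk₅ (fun t ht => hz t ht) hzle (ε/2) (by linarith)
    filter_upwards [this] with t h
    linarith
  have hyev : ∀ ε > (0:ℝ), ∀ᶠ t in atTop, y t ≤ M + ε := by
    intro ε hε
    have hyle : ∀ᶠ t in atTop, k₃ * (z t - y t) ≤ k₃ * ((M + ε/2) - y t) := by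
      filter_upwards [hzev (ε/2) (by linarith)] with t h
      nlinarith
    have := comp_upper hk₃ (fun t ht => hy t ht) hyle (ε/2) (by linarith)
    filter_upwards [this] with t h
    linarith
  refine ⟨?_, ?_, ?_⟩
  · exact limsup_le_aux ((eventually_ge_atTop (0:ℝ)).mono fun t ht => (hxpos t ht).le) hxev
  · exact limsup_le_aux ((eventually_ge_atTop (0:ℝ)).mono fun t ht => hznn t ht) hzev
  · exact limsup_le_aux ((eventually_ge_atTop (0:ℝ)).mono fun t ht => hynn t ht) hyev
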